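/- Let r(u) = A₁·e^{-a₁u} + A₂·e^{-a₂u} for u ≥ 0, with a₁, a₂ > 0 distinct, and suppose a₁A₁ + a₂A₂ = 0 (so r'(0) = 0) and r''(0) ≠ 0, r(0) ≠ 0. Then for all u, v > 0: r(u+v) = r(u)·r(v)/r(0) + r'(u)·r'(v)/r''(0). -/

import Mathlib

theorem stmt_7 (a₁ a₂ A₁ A₂ : ℝ) (h1 : 0 < a₁) (h2 : 0 < a₂) (hne : a₁ ≠ a₂)
    (hderiv0 : a₁ * A₁ + a₂ * A₂ = 0)
    (r : ℝ → ℝ)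
    (hr : ∀ u : ℝ, r u = A₁ * Real.exp (-a₁ * u) + A₂ * Real.exp (-a₂ * u))
    (h2nd : deriv (deriv r) 0 ≠ 0) (h0 : r 0 ≠ 0) :
    ∀ u v : ℝ, 0 < u → 0 < v →
      r (u + v) = r u * r v / r 0 + deriv r u * deriv r v / deriv (deriv r) 0 := by
  have hre : r = fun u => A₁ * Real.exp (-a₁ * u) + A₂ * Real.exp (-a₂ * u) := funext hr
  subst hre
  have key : ∀ (B₁ B₂ : ℝ) (x : ℝ),
      HasDerivAt (fun u => B₁ * Real.exp (-a₁ * u) + B₂ * Real.exp (-a₂ * u))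
        (B₁ * (Real.exp (-a₁ * x) * -a₁) + B₂ * (Real.exp (-a₂ * x) * -a₂)) x := by
    intro B₁ B₂ x
    have e1 : HasDerivAt (fun u => -a₁ * u) (-a₁) x := by
      simpa using (hasDerivAt_id x).const_mul (-a₁)
    have e2 : HasDerivAt (fun u => -a₂ * u) (-a₂) x := by
      simpa using (hasDerivAt_id x).const_mul (-a₂)
    exact ((e1.exp.const_mul B₁).add (e2.exp.const_mul B₂))
  have hd1 : deriv (fun u => A₁ * Real.exp (-a₁ * u) + A₂ * Real.exp (-a₂ * u))
      = fun x => (-(a₁ * A₁)) * Real.exp (-a₁ * x) + (-(a₂ * A₂)) * Real.exp (-a₂ * x) := by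
    funext x
    rw [(key A₁ A₂ x).deriv]; ring
  rw [hd1] at h2nd ⊢
  have hd2 : deriv (fun x => (-(a₁ * A₁)) * Real.exp (-a₁ * x) + (-(a₂ * A₂)) * Real.exp (-a₂ * x))
      = fun x => (a₁ * (a₁ * A₁)) * Real.exp (-a₁ * x) + (a₂ * (a₂ * A₂)) * Real.exp (-a₂ * x) := by
    funext x
    rw [(key (-(a₁ * A₁)) (-(a₂ * A₂)) x).deriv]; ring
  rw [hd2] at h2nd ⊢
  intro u v hu hv
  simp only [mul_zero, Real.exp_zero, mul_one] at h2nd h0 ⊢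
  have eadd1 : Real.exp (-a₁ * (u + v)) = Real.exp (-a₁ * u) * Real.exp (-a₁ * v) := by
    rw [← Real.exp_add]; ring_nf
  have eadd2 : Real.exp (-a₂ * (u + v)) = Real.exp (-a₂ * u) * Real.exp (-a₂ * v) := by
    rw [← Real.exp_add]; ring_nf
  rw [eadd1, eadd2]
  set e1u := Real.exp (-a₁ * u)
  set e2u := Real.exp (-a₂ * u)
  set e1v := Real.exp (-a₁ * v)
  set e2v := Real.exp (-a₂ * v)
  have h2nd' : A₁ * a₁ ^ 2 + A₂ * a₂ ^ 2 ≠ 0 := by intro h; apply h2nd; linear_combination h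
  field_simp
  linear_combination (A₁ * (a₂ * A₂ - a₁ * A₁) * (e1u * e1v) +
    A₂ * (a₁ * A₁ - a₂ * A₂) * (e2u * e2v) -
    A₁ * A₂ * (a₁ + a₂) * (e1u * e2v + e2u * e1v)) * hderiv0
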